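/- arXiv:2412.03712 — 2 statements merged into one kernel-verified Lean document; each statement's English description precedes it below -/
import Mathlib

section
/- Let Q be a real (or complex) 3×2 matrix and R a real (or complex) 2×3 matrix, and suppose the 2×2 matrix RQ is diagonalizable with nonzero eigenvalues μ₁ and μ₂. Then the 5×5 block matrix M = [[0, Q], [R, 0]] is diagonalizable and its eigenvalues are exactly 0, √μ₁, −√μ₁, √μ₂, −√μ₂ (with any fixed choice of complex square roots). -/
open Matrix

theorem stmt_0 (Q : Matrix (Fin 3) (Fin 2) ℂ) (R : Matrix (Fin 2) (Fin 3) ℂ)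
    (μ₁ μ₂ r₁ r₂ : ℂ) (hr₁ : r₁ ^ 2 = μ₁) (hr₂ : r₂ ^ 2 = μ₂)
    (hμ₁ : μ₁ ≠ 0) (hμ₂ : μ₂ ≠ 0)
    (hdiag : ∃ P : Matrix (Fin 2) (Fin 2) ℂ, IsUnit P.det ∧
      R * Q = P * Matrix.diagonal ![μ₁, μ₂] * P⁻¹) :
    ∃ (S : Matrix (Fin 3 ⊕ Fin 2) (Fin 3 ⊕ Fin 2) ℂ) (dv : Fin 3 ⊕ Fin 2 → ℂ),
      IsUnit S.det ∧
      Matrix.fromBlocks 0 Q R 0 = S * Matrix.diagonal dv * S⁻¹ ∧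
      (Finset.univ.val.map dv) = ({0, r₁, -r₁, r₂, -r₂} : Multiset ℂ) := by
  obtain ⟨P, hP, hA⟩ := hdiag
  have hr₁0 : r₁ ≠ 0 := fun h => hμ₁ (by rw [← hr₁, h]; ring)
  have hr₂0 : r₂ ≠ 0 := fun h => hμ₂ (by rw [← hr₂, h]; ring)
  have hμ : μ₁ * μ₂ ≠ 0 := mul_ne_zero hμ₁ hμ₂
  have hPd : P.det ≠ 0 := hP.ne_zero
  set N : Matrix (Fin 2) (Fin 2) ℂ := P⁻¹ with hNdef
  set Dμ : Matrix (Fin 2) (Fin 2) ℂ := diagonal ![μ₁, μ₂] with hDμ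
  set Dr : Matrix (Fin 2) (Fin 2) ℂ := diagonal ![r₁, r₂] with hDr
  set Dinv : Matrix (Fin 2) (Fin 2) ℂ := diagonal ![(2*μ₁)⁻¹, (2*μ₂)⁻¹] with hDinv
  set Drinv : Matrix (Fin 2) (Fin 2) ℂ := diagonal ![(2*r₁)⁻¹, (2*r₂)⁻¹] with hDrinv
  set D₁ : Matrix (Fin 3) (Fin 3) ℂ := diagonal ![0, r₁, r₂] with hD₁
  set D₂ : Matrix (Fin 2) (Fin 2) ℂ := diagonal ![-r₁, -r₂] with hD₂
  have hPN : P * N = 1 := mul_nonsing_inv P hP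
  have hNP : N * P = 1 := nonsing_inv_mul P hP
  set k : Fin 3 → ℂ := ![R 0 1 * R 1 2 - R 0 2 * R 1 1, R 0 2 * R 1 0 - R 0 0 * R 1 2,
    R 0 0 * R 1 1 - R 0 1 * R 1 0] with hk
  set φ : Fin 3 → ℂ := ![Q 1 0 * Q 2 1 - Q 2 0 * Q 1 1, Q 2 0 * Q 0 1 - Q 0 0 * Q 2 1,
    Q 0 0 * Q 1 1 - Q 1 0 * Q 0 1] with hφ
  set kM : Matrix (Fin 3) (Fin 1) ℂ := of fun i _ => k i with hkM
  set φM : Matrix (Fin 1) (Fin 3) ℂ := of fun _ j => φ j with hφM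
  set e₀r : Matrix (Fin 1) (Fin 3) ℂ := of fun _ j => if j = 0 then 1 else 0 with he₀r
  set e₀c : Matrix (Fin 3) (Fin 1) ℂ := of fun i _ => if i = 0 then 1 else 0 with he₀c
  set E : Matrix (Fin 2) (Fin 3) ℂ := of fun i j => if (j:ℕ) = (i:ℕ)+1 then 1 else 0 with hE
  set Et : Matrix (Fin 3) (Fin 2) ℂ := of fun i j => if (i:ℕ) = (j:ℕ)+1 then 1 else 0 with hEt
  -- determinant of R*Q
  have hdet2 : (R * Q).det = μ₁ * μ₂ := by
    rw [hA]
    rw [Matrix.det_mul, Matrix.det_mul, hNdef, Matrix.det_nonsing_inv, Ring.inverse_eq_inv']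
    rw [hDμ, Matrix.det_diagonal]
    field_simp
    simp [Fin.prod_univ_two]
  -- concrete entrywise lemmas
  have h1 : e₀c * e₀r + Et * E = 1 := by
    ext i j
    fin_cases i <;> fin_cases j <;>
      simp [he₀c, he₀r, hEt, hE, Matrix.mul_apply, Fin.sum_univ_succ, Matrix.one_apply]
  have h2 : E * D₁ = Dr * E := by
    ext i j
    fin_cases i <;> fin_cases j <;>
      simp [hE, hD₁, hDr, Matrix.mul_apply, Fin.sum_univ_succ, Matrix.diagonal]
  have h3 : e₀r * D₁ = 0 := by
    ext i j
    fin_cases i <;> fin_cases j <;>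
      simp [he₀r, hD₁, Matrix.mul_apply, Fin.sum_univ_succ, Matrix.diagonal]
  have h4 : R * kM = 0 := by
    ext i j
    fin_cases i <;> fin_cases j <;>
      (simp [hkM, hk, Matrix.mul_apply, Fin.sum_univ_succ]; ring)
  have h5 : φM * Q = 0 := by
    ext i j
    fin_cases i <;> fin_cases j <;>
      (simp [hφM, hφ, Matrix.mul_apply, Fin.sum_univ_succ]; ring)
  have h6 : φM * kM = (μ₁ * μ₂) • (1 : Matrix (Fin 1) (Fin 1) ℂ) := by
    have e : (R * Q).det = (R 0 0 * Q 0 0 + R 0 1 * Q 1 0 + R 0 2 * Q 2 0) *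
        (R 1 0 * Q 0 1 + R 1 1 * Q 1 1 + R 1 2 * Q 2 1) -
        (R 0 0 * Q 0 1 + R 0 1 * Q 1 1 + R 0 2 * Q 2 1) *
        (R 1 0 * Q 0 0 + R 1 1 * Q 1 0 + R 1 2 * Q 2 0) := by
      simp [Matrix.det_fin_two, Matrix.mul_apply, Fin.sum_univ_succ]
      ring
    ext i j
    fin_cases i <;> fin_cases j
    simp [hφM, hkM, hφ, hk, Matrix.mul_apply, Fin.sum_univ_succ, Matrix.one_apply]
    linear_combination hdet2 - e
  have h7 : ∀ (m : Type) (X : Matrix (Fin 2) m ℂ), Dinv * (Dμ * X) = (2⁻¹ : ℂ) • X := by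
    have hDD : Dinv * Dμ = (2⁻¹ : ℂ) • 1 := by
      rw [hDinv, hDμ, Matrix.diagonal_mul_diagonal]
      ext i j
      fin_cases i <;> fin_cases j <;>
        simp [Matrix.diagonal, Matrix.one_apply] <;> field_simp
    intro m X
    rw [← Matrix.mul_assoc, hDD, Matrix.smul_mul, Matrix.one_mul]
  have h8 : ∀ (m : Type) (X : Matrix (Fin 2) m ℂ), Drinv * (Dr * X) = (2⁻¹ : ℂ) • X := by
    have hDD : Drinv * Dr = (2⁻¹ : ℂ) • 1 := by
      rw [hDrinv, hDr, Matrix.diagonal_mul_diagonal]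
      ext i j
      fin_cases i <;> fin_cases j <;>
        simp [Matrix.diagonal, Matrix.one_apply] <;> field_simp
    intro m X
    rw [← Matrix.mul_assoc, hDD, Matrix.smul_mul, Matrix.one_mul]
  have h7'' : Dinv * Dμ = (2⁻¹ : ℂ) • 1 := by
    have := h7 (Fin 2) 1; simpa using this
  have h8'' : Drinv * Dr = (2⁻¹ : ℂ) • 1 := by
    have := h8 (Fin 2) 1; simpa using this
  have h9 : Dr * Dr = Dμ := by
    ext i j
    fin_cases i <;> fin_cases j <;>
      simp [hDr, hDμ, Matrix.mul_apply, Fin.sum_univ_succ, Matrix.diagonal, ← hr₁, ← hr₂, sq]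
  have h10 : D₂ = -Dr := by
    rw [hD₂, hDr]
    ext i j
    fin_cases i <;> fin_cases j <;> simp [Matrix.diagonal]
  -- consequences of hA
  have hRQP : ∀ (m : Type) (X : Matrix (Fin 2) m ℂ), R * (Q * (P * X)) = P * (Dμ * X) := by
    intro m X
    rw [← Matrix.mul_assoc, ← Matrix.mul_assoc, hA]
    rw [Matrix.mul_assoc (P * Dμ) N P, hNP, Matrix.mul_one, Matrix.mul_assoc]
  have hRQP' : R * (Q * P) = P * Dμ := by
    have := hRQP (Fin 2) 1
    simpa using this
  have hNPX : ∀ (m : Type) (X : Matrix (Fin 2) m ℂ), N * (P * X) = X := by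
    intro m X
    rw [← Matrix.mul_assoc, hNP, Matrix.one_mul]
  have hNRQP : ∀ (m : Type) (X : Matrix (Fin 2) m ℂ), N * (R * (Q * (P * X))) = Dμ * X := by
    intro m X
    rw [hRQP, hNPX]
  have hNRQP'' : N * (R * (Q * P)) = Dμ := by
    rw [hRQP', hNPX (Fin 2) Dμ]
  have hf1 : ∀ (m : Type) (X : Matrix (Fin 2) m ℂ), φM * (Q * X) = 0 := by
    intro m X
    rw [← Matrix.mul_assoc, h5, Matrix.zero_mul]
  have hf2 : ∀ (m : Type) (X : Matrix (Fin 1) m ℂ), R * (kM * X) = 0 := by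
    intro m X
    rw [← Matrix.mul_assoc, h4, Matrix.zero_mul]
  have hf3 : ∀ (m : Type) (X : Matrix (Fin 1) m ℂ), φM * (kM * X) = (μ₁ * μ₂) • X := by
    intro m X
    rw [← Matrix.mul_assoc, h6, Matrix.smul_mul, Matrix.one_mul]
  have h9' : ∀ (m : Type) (X : Matrix (Fin 2) m ℂ), Dr * (Dr * X) = Dμ * X := by
    intro m X
    rw [← Matrix.mul_assoc, h9]
  -- block identities for T * S = 1
  have hb11 : ((μ₁*μ₂)⁻¹ • (e₀c * φM) + Et * (Dinv * (N * R))) * (kM * e₀r + Q * (P * E))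
      + (Et * (Drinv * N)) * (P * (Dr * E)) = 1 := by
    simp only [Matrix.add_mul, Matrix.mul_add, Matrix.smul_mul, Matrix.mul_assoc,
      hf1, hf2, hf3, hNRQP, hNPX, h7, h8, Matrix.mul_zero, Matrix.zero_mul,
      smul_zero, Matrix.mul_smul, smul_smul, inv_mul_cancel₀ hμ, one_smul,
      add_zero, zero_add]
    rw [← h1]
    module
  have hb12 : ((μ₁*μ₂)⁻¹ • (e₀c * φM) + Et * (Dinv * (N * R))) * (Q * P)
      + (Et * (Drinv * N)) * (-(P * Dr)) = 0 := by
    simp only [Matrix.add_mul, Matrix.mul_add, Matrix.smul_mul, Matrix.mul_neg,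
      Matrix.neg_mul, Matrix.mul_assoc, hf1, hNRQP'', hNPX,
      Matrix.mul_zero, Matrix.zero_mul, smul_zero, zero_add, add_zero]
    rw [h7'', h8'']
    module
  have hb21 : (Dinv * (N * R)) * (kM * e₀r + Q * (P * E))
      + (-(Drinv * N)) * (P * (Dr * E)) = 0 := by
    simp only [Matrix.add_mul, Matrix.mul_add, Matrix.mul_neg, Matrix.neg_mul,
      Matrix.mul_assoc, hf2, hNRQP, hNPX, h7, h8,
      Matrix.mul_zero, Matrix.zero_mul, zero_add, add_zero]
    module
  have hb22 : (Dinv * (N * R)) * (Q * P) + (-(Drinv * N)) * (-(P * Dr)) = 1 := by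
    simp only [Matrix.mul_neg, Matrix.neg_mul, neg_neg, Matrix.mul_assoc, hNRQP'', hNPX]
    rw [h7'', h8'']
    module
  -- block identities for M * S = S * D
  have hm11 : Q * (P * (Dr * E)) = (kM * e₀r + Q * (P * E)) * D₁ := by
    simp only [Matrix.add_mul, Matrix.mul_assoc, h2, h3, Matrix.mul_zero, zero_add]
  have hm12 : Q * (-(P * Dr)) = (Q * P) * D₂ := by
    rw [h10]
    simp only [Matrix.mul_neg, Matrix.neg_mul, Matrix.mul_assoc]
  have hm21 : R * (kM * e₀r + Q * (P * E)) = (P * (Dr * E)) * D₁ := by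
    simp only [Matrix.mul_add, hf2, hRQP, Matrix.mul_assoc, h2, h9', zero_add]
  have hm22 : R * (Q * P) = (-(P * Dr)) * D₂ := by
    rw [h10, hRQP']
    simp only [Matrix.mul_neg, Matrix.neg_mul, neg_neg, Matrix.mul_assoc, h9]
  -- assemble
  set S : Matrix (Fin 3 ⊕ Fin 2) (Fin 3 ⊕ Fin 2) ℂ :=
    fromBlocks (kM * e₀r + Q * (P * E)) (Q * P) (P * (Dr * E)) (-(P * Dr)) with hS
  set dv : Fin 3 ⊕ Fin 2 → ℂ := Sum.elim ![0, r₁, r₂] ![-r₁, -r₂] with hdv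
  have hTS : (fromBlocks ((μ₁*μ₂)⁻¹ • (e₀c * φM) + Et * (Dinv * (N * R))) (Et * (Drinv * N))
      (Dinv * (N * R)) (-(Drinv * N))) * S = 1 := by
    rw [hS, fromBlocks_multiply, ← fromBlocks_one]
    rw [hb11, hb12, hb21, hb22]
  have hdetS : IsUnit S.det := Matrix.isUnit_det_of_left_inverse hTS
  have hMS : fromBlocks 0 Q R 0 * S = S * diagonal dv := by
    rw [hdv, ← Matrix.fromBlocks_diagonal, hS, fromBlocks_multiply, fromBlocks_multiply]
    rw [← hD₁, ← hD₂]
    simp only [Matrix.zero_mul, Matrix.mul_zero, zero_add, add_zero]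
    rw [hm11, hm12, hm21, hm22]
  refine ⟨S, dv, hdetS, ?_, ?_⟩
  · calc fromBlocks 0 Q R 0 = fromBlocks 0 Q R 0 * (S * S⁻¹) := by
          rw [mul_nonsing_inv S hdetS, Matrix.mul_one]
      _ = (fromBlocks 0 Q R 0 * S) * S⁻¹ := by rw [Matrix.mul_assoc]
      _ = S * diagonal dv * S⁻¹ := by rw [hMS]
  · rw [hdv]
    show ({0, r₁, r₂, -r₁, -r₂} : Multiset ℂ) = _
    simp only [Multiset.insert_eq_cons]
    rw [Multiset.cons_swap r₂ (-r₁)]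
end

section
/- Let H₀, H₁ > 0, k ≠ 0 real, and let c₁, c₂, c₃, d₀, d₁ be reals such that d₀, d₁, c₁, c₂, c₃ > 0, B₁ := (H₀+H₁)c₃ − c₂ > 0, B₂ := H₀H₁c₂ − (H₀+H₁)c₁ > 0, B₃ := (H₀+H₁)d₁ − d₀ > 0, D₁ := c₂B₁ − (H₀+H₁)B₃ > 0, D₂ := c₁B₂ − d₀(H₀H₁)² > 0, D₃ := c₃B₁B₃ − B₃² − d₁B₁² > 0, and D₄ := (c₁c₂ − 2d₀H₀H₁)B₁ + (c₂H₀H₁ − 2c₁(H₀+H₁))B₃ > 0. Then, for the quintic s⁵ + a₁s⁴ + a₂s³ + a₃s² + a₄s + a₅ with a₁ = H₀+H₁, a₂ = H₀H₁ + c₃k², a₃ = c₂k², a₄ = c₁k² + d₁k⁴, a₅ = d₀k⁴, all the Hurwitz conditions hold: aᵢ > 0 for i = 1,…,5, a₁a₂ − a₃ > 0, a₃(a₁a₂−a₃) − a₁(a₁a₄−a₅) > 0, and a₄[a₃(a₁a₂−a₃) − a₁(a₁a₄−a₅)] − a₅(a₁a₂² + a₅ − a₂a₃ − a₁a₄) >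 0. -/
theorem stmt_19 (H₀ H₁ k c₁ c₂ c₃ d₀ d₁ : ℝ)
    (hH₀ : 0 < H₀) (hH₁ : 0 < H₁) (hk : k ≠ 0)
    (hd₀ : 0 < d₀) (hd₁ : 0 < d₁) (hc₁ : 0 < c₁) (hc₂ : 0 < c₂) (hc₃ : 0 < c₃)
    (hB₁ : 0 < (H₀ + H₁) * c₃ - c₂)
    (hB₂ : 0 < H₀ * H₁ * c₂ - (H₀ + H₁) * c₁)
    (hB₃ : 0 < (H₀ + H₁) * d₁ - d₀)
    (hD₁ : 0 < c₂ * ((H₀ + H₁) * c₃ - c₂) - (H₀ + H₁) * ((H₀ + H₁) * d₁ - d₀))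
    (hD₂ : 0 < c₁ * (H₀ * H₁ * c₂ - (H₀ + H₁) * c₁) - d₀ * (H₀ * H₁) ^ 2)
    (hD₃ : 0 < c₃ * ((H₀ + H₁) * c₃ - c₂) * ((H₀ + H₁) * d₁ - d₀)
              - ((H₀ + H₁) * d₁ - d₀) ^ 2 - d₁ * ((H₀ + H₁) * c₃ - c₂) ^ 2)
    (hD₄ : 0 < (c₁ * c₂ - 2 * d₀ * H₀ * H₁) * ((H₀ + H₁) * c₃ - c₂)
              + (c₂ * H₀ * H₁ - 2 * c₁ * (H₀ + H₁)) * ((H₀ + H₁) * d₁ - d₀))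
    (a₁ a₂ a₃ a₄ a₅ : ℝ)
    (ha₁ : a₁ = H₀ + H₁) (ha₂ : a₂ = H₀ * H₁ + c₃ * k ^ 2) (ha₃ : a₃ = c₂ * k ^ 2)
    (ha₄ : a₄ = c₁ * k ^ 2 + d₁ * k ^ 4) (ha₅ : a₅ = d₀ * k ^ 4) :
    (0 < a₁ ∧ 0 < a₂ ∧ 0 < a₃ ∧ 0 < a₄ ∧ 0 < a₅) ∧
    0 < a₁ * a₂ - a₃ ∧
    0 < a₃ * (a₁ * a₂ - a₃) - a₁ * (a₁ * a₄ - a₅) ∧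
    0 < a₄ * (a₃ * (a₁ * a₂ - a₃) - a₁ * (a₁ * a₄ - a₅))
        - a₅ * (a₁ * a₂ ^ 2 + a₅ - a₂ * a₃ - a₁ * a₄) := by
  subst ha₁ ha₂ ha₃ ha₄ ha₅
  have hK : 0 < k ^ 2 := by positivity
  refine ⟨⟨by positivity, by positivity, by positivity, by positivity, by positivity⟩, ?_, ?_, ?_⟩
  · nlinarith [mul_pos hK hB₁, mul_pos (mul_pos hH₀ hH₁) (add_pos hH₀ hH₁)]
  · nlinarith [mul_pos hK (mul_pos (add_pos hH₀ hH₁) hB₂), mul_pos (mul_pos hK hK) hD₁]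
  · nlinarith [mul_pos (mul_pos hK hK) (mul_pos (add_pos hH₀ hH₁) hD₂),
      mul_pos (mul_pos hK (mul_pos hK hK)) hD₄,
      mul_pos (mul_pos (mul_pos hK hK) (mul_pos hK hK)) hD₃]
end
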